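/- Let b, b̃ ∈ {X,Y,Z}^n be distinct strings and let r := min{ i : b_i ≠ b̃_i } be their first point of disagreement. Define c_r := β_r if 1 ≤ r ≤ n−1 and c_r := α if r = n. Then the trace distance between the corresponding prefix/tree states satisfies the lower bound (1/2)‖ρ_b − ρ_{b̃}‖₁ ≥ |c_r|/2. -/

import Mathlib

open Matrix Finset

noncomputable section

/-- The three Pauli matrices `σ_X, σ_Y, σ_Z` as `2 × 2` complex matrices. -/
def pauli : Fin 3 → Matrix (Fin 2) (Fin 2) ℂ :=
  ![!![0, 1; 1, 0], !![0, -Complex.I; Complex.I, 0], !![1, 0; 0, -1]]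

/-- The prefix Pauli operator `P_b^{(k)} = (⊗_{i=1}^k σ_{b_i}) ⊗ I^{⊗(n-k)}`, realized as a
`2^n × 2^n` complex matrix indexed by `Fin n → Fin 2` (the `i`-th tensor factor of the Kronecker
product is `σ_{b_i}` if `i < k` (0-indexed) and the identity otherwise). -/
def prefixPauli (n : ℕ) (b : Fin n → Fin 3) (k : ℕ) :
    Matrix (Fin n → Fin 2) (Fin n → Fin 2) ℂ :=
  Matrix.of fun x y =>
    ∏ i : Fin n,
      (if (i : ℕ) < k then pauli (b i) else (1 : Matrix (Fin 2) (Fin 2) ℂ)) (x i) (y i)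

/-- The prefix/tree state `ρ_b = (1/D)(I + ∑_{k=1}^{n-1} β_k P_b^{(k)} + α P_b^{(n)})`,
with `D = 2^n`. -/
def rhoState (n : ℕ) (b : Fin n → Fin 3) (α : ℝ) (β : ℕ → ℝ) :
    Matrix (Fin n → Fin 2) (Fin n → Fin 2) ℂ :=
  ((2 : ℂ) ^ n)⁻¹ •
    (1 + ∑ k ∈ Finset.Icc 1 (n - 1), (β k : ℂ) • prefixPauli n b k
       + (α : ℂ) • prefixPauli n b n)

/-- The trace norm of a Hermitian matrix: the sum of the absolute values of its (real)
eigenvalues. -/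
def traceNorm {d : Type*} [Fintype d] [DecidableEq d] {A : Matrix d d ℂ}
    (hA : A.IsHermitian) : ℝ :=
  ∑ i, |hA.eigenvalues i|

/-! ### Auxiliary lemmas -/

lemma pauli_mul_self (j : Fin 3) : pauli j * pauli j = 1 := by
  fin_cases j <;> ext i l <;> fin_cases i <;> fin_cases l <;>
    simp [pauli, Matrix.mul_apply, Fin.sum_univ_two, Matrix.one_apply, Complex.ext_iff]

lemma pauli_star (j : Fin 3) : star (pauli j) = pauli j := by
  fin_cases j <;> ext i l <;> fin_cases i <;> fin_cases l <;>
    simp [pauli, Matrix.conjTranspose_apply, Complex.ext_iff]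

lemma pauli_trace (j : Fin 3) : (pauli j).trace = 0 := by
  fin_cases j <;> simp [pauli, Matrix.trace, Fin.sum_univ_two, Matrix.diag]

lemma pauli_mul_trace_ne {j j' : Fin 3} (h : j ≠ j') : (pauli j * pauli j').trace = 0 := by
  fin_cases j <;> fin_cases j' <;> first
    | exact absurd rfl h
    | simp [pauli, Matrix.trace, Matrix.diag, Matrix.mul_apply, Fin.sum_univ_two, Complex.ext_iff]

/-- Tensor (Kronecker) product of `n` two-by-two matrices, as a matrix on `Fin n → Fin 2`. -/
def kron (n : ℕ) (A : Fin n → Matrix (Fin 2) (Fin 2) ℂ) :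
    Matrix (Fin n → Fin 2) (Fin n → Fin 2) ℂ :=
  Matrix.of fun x y => ∏ i, A i (x i) (y i)

lemma kron_mul (n : ℕ) (A B : Fin n → Matrix (Fin 2) (Fin 2) ℂ) :
    kron n A * kron n B = kron n (fun i => A i * B i) := by
  ext x y
  simp only [kron, Matrix.mul_apply, Matrix.of_apply]
  rw [Fintype.prod_sum (fun i j => A i (x i) j * B i j (y i))]
  congr 1
  ext z
  rw [← Finset.prod_mul_distrib]

lemma kron_one (n : ℕ) : kron n (fun _ => 1) = 1 := by
  ext x y
  simp only [kron, Matrix.of_apply, Matrix.one_apply]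
  by_cases h : x = y
  · subst h; simp
  · obtain ⟨i, hi⟩ := Function.ne_iff.mp h
    rw [if_neg h]
    exact Finset.prod_eq_zero (mem_univ i) (by simp [Matrix.one_apply, hi])

lemma kron_star (n : ℕ) (A : Fin n → Matrix (Fin 2) (Fin 2) ℂ) :
    star (kron n A) = kron n (fun i => star (A i)) := by
  ext x y
  simp only [kron, Matrix.star_apply, Matrix.of_apply, star_prod, Matrix.conjTranspose_apply]

lemma kron_trace (n : ℕ) (A : Fin n → Matrix (Fin 2) (Fin 2) ℂ) :
    (kron n A).trace = ∏ i, (A i).trace := by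
  simp only [Matrix.trace, Matrix.diag, kron, Matrix.of_apply]
  rw [Fintype.prod_sum (fun i j => A i j j)]

lemma prefixPauli_eq_kron (n : ℕ) (b : Fin n → Fin 3) (k : ℕ) :
    prefixPauli n b k
      = kron n (fun i => if (i : ℕ) < k then pauli (b i) else 1) := rfl

lemma abs_trace_mul_le {d : Type*} [Fintype d] [DecidableEq d] {A : Matrix d d ℂ}
    (hA : A.IsHermitian) (P : Matrix d d ℂ) (hP : star P * P = 1) :
    ‖(A * P).trace‖ ≤ traceNorm hA := by
  set U : Matrix d d ℂ := (hA.eigenvectorUnitary : Matrix d d ℂ) with hUdef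
  have hUU : star U * U = 1 := mem_unitaryGroup_iff'.mp hA.eigenvectorUnitary.2
  set M : Matrix d d ℂ := star U * P * U with hMdef
  have htr : (A * P).trace = ∑ i, (hA.eigenvalues i : ℂ) * M i i := by
    conv_lhs => rw [hA.spectral_theorem, Unitary.conjStarAlgAut_apply]
    rw [show (U * diagonal (RCLike.ofReal ∘ hA.eigenvalues) * star U) * P
        = U * (diagonal (RCLike.ofReal ∘ hA.eigenvalues) * star U * P) by
          rw [mul_assoc, mul_assoc, mul_assoc],
      trace_mul_comm,
      show diagonal (RCLike.ofReal ∘ hA.eigenvalues) * star U * P * U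
        = diagonal (RCLike.ofReal ∘ hA.eigenvalues) * M by
          rw [hMdef, mul_assoc, mul_assoc, mul_assoc]]
    simp [Matrix.trace, Matrix.diag, Matrix.diagonal_mul]
  have hM : ∀ i, ‖M i i‖ ≤ 1 := by
    intro i
    set x : EuclideanSpace ℂ d := (WithLp.equiv 2 _).symm (fun j => U j i) with hxdef
    set y : EuclideanSpace ℂ d := (WithLp.equiv 2 _).symm (fun j => (P * U) j i) with hydef
    have hxy : (inner ℂ x y : ℂ) = M i i := by
      simp only [PiLp.inner_apply, RCLike.inner_apply, hxdef, hydef, WithLp.equiv_symm_apply, PiLp.toLp_apply,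
        hMdef, mul_assoc]
      simp [Matrix.mul_apply, Matrix.conjTranspose_apply]
      exact Finset.sum_congr rfl fun _ _ => mul_comm _ _
    have hxx : (inner ℂ x x : ℂ) = 1 := by
      have h1 : (star U * U) i i = (1 : Matrix d d ℂ) i i := by rw [hUU]
      simp only [Matrix.mul_apply, Matrix.conjTranspose_apply, Matrix.one_apply_eq] at h1
      simp only [PiLp.inner_apply, RCLike.inner_apply, hxdef, WithLp.equiv_symm_apply, PiLp.toLp_apply]
      rw [← h1]
      exact Finset.sum_congr rfl fun _ _ => mul_comm _ _
    have hyy : (inner ℂ y y : ℂ) = 1 := by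
      have h2 : (star (P * U) * (P * U)) i i = (1 : Matrix d d ℂ) i i := by
        rw [Matrix.star_mul, show star U * star P * (P * U) = star U * ((star P * P) * U) by
            rw [mul_assoc, mul_assoc], hP, one_mul, hUU]
      simp only [Matrix.mul_apply, Matrix.conjTranspose_apply, Matrix.one_apply_eq] at h2
      simp only [PiLp.inner_apply, RCLike.inner_apply, hydef, WithLp.equiv_symm_apply, PiLp.toLp_apply]
      rw [← h2]
      exact Finset.sum_congr rfl fun _ _ => mul_comm _ _
    have hnx : ‖x‖ = 1 := by
      have := inner_self_eq_norm_sq_to_K (𝕜 := ℂ) x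
      rw [hxx] at this
      have h3 : (‖x‖ : ℝ) ^ 2 = 1 := by
        have h := this.symm
        rw [show ((1:ℂ)) = ((1:ℝ):ℂ) by norm_num, ← RCLike.ofReal_pow] at h
        exact RCLike.ofReal_injective (K := ℂ) h
      nlinarith [norm_nonneg x]
    have hny : ‖y‖ = 1 := by
      have := inner_self_eq_norm_sq_to_K (𝕜 := ℂ) y
      rw [hyy] at this
      have h3 : (‖y‖ : ℝ) ^ 2 = 1 := by
        have h := this.symm
        rw [show ((1:ℂ)) = ((1:ℝ):ℂ) by norm_num, ← RCLike.ofReal_pow] at h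
        exact RCLike.ofReal_injective (K := ℂ) h
      nlinarith [norm_nonneg y]
    calc ‖M i i‖ = ‖(inner ℂ x y : ℂ)‖ := by rw [hxy]
      _ ≤ ‖x‖ * ‖y‖ := norm_inner_le_norm x y
      _ = 1 := by rw [hnx, hny, one_mul]
  calc ‖(A * P).trace‖
      ≤ ∑ i, ‖(hA.eigenvalues i : ℂ) * M i i‖ := by
        rw [htr]; exact norm_sum_le _ _
    _ ≤ ∑ i, |hA.eigenvalues i| := by
        refine Finset.sum_le_sum fun i _ => ?_
        rw [norm_mul, Complex.norm_real, Real.norm_eq_abs]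
        exact mul_le_of_le_one_right (abs_nonneg _) (hM i)
    _ = traceNorm hA := rfl

/-- The trace of a product of two prefix Pauli operators factors over the tensor factors. -/
lemma trace_pp (n : ℕ) (c b : Fin n → Fin 3) (k r : ℕ) :
    (prefixPauli n c k * prefixPauli n b r).trace
      = ∏ i : Fin n, ((if (i : ℕ) < k then pauli (c i) else 1)
          * (if (i : ℕ) < r then pauli (b i) else 1)).trace := by
  rw [prefixPauli_eq_kron, prefixPauli_eq_kron, kron_mul, kron_trace]

lemma trace_pp_lt (n : ℕ) (c b : Fin n → Fin 3) {k r : ℕ} (hk : k < r) (hrn : r ≤ n) :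
    (prefixPauli n c k * prefixPauli n b r).trace = 0 := by
  rw [trace_pp]
  refine Finset.prod_eq_zero (mem_univ (⟨k, lt_of_lt_of_le hk hrn⟩ : Fin n)) ?_
  simp [hk, pauli_trace]

lemma trace_pp_gt (n : ℕ) (c b : Fin n → Fin 3) {k r : ℕ} (hk : r < k) (hkn : k ≤ n) :
    (prefixPauli n c k * prefixPauli n b r).trace = 0 := by
  rw [trace_pp]
  refine Finset.prod_eq_zero (mem_univ (⟨r, lt_of_lt_of_le hk hkn⟩ : Fin n)) ?_
  rw [if_pos hk, if_neg (lt_irrefl r), mul_one, pauli_trace]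

lemma trace_pp_same (n : ℕ) (b : Fin n → Fin 3) (r : ℕ) :
    (prefixPauli n b r * prefixPauli n b r).trace = 2 ^ n := by
  rw [trace_pp]
  have : ∀ i : Fin n, ((if (i : ℕ) < r then pauli (b i) else 1)
      * (if (i : ℕ) < r then pauli (b i) else 1)).trace = 2 := by
    intro i
    by_cases h : (i : ℕ) < r
    · rw [if_pos h, pauli_mul_self]; simp [Matrix.trace, Matrix.diag, Fin.sum_univ_two]
    · rw [if_neg h, one_mul]; simp [Matrix.trace, Matrix.diag, Fin.sum_univ_two]
  rw [Finset.prod_congr rfl (fun i _ => this i), Finset.prod_const, card_univ,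
    Fintype.card_fin]

lemma trace_pp_diff (n : ℕ) (c b : Fin n → Fin 3) {r : ℕ} (hr1 : 1 ≤ r) (hrn : r ≤ n)
    (hne : c ⟨r - 1, lt_of_lt_of_le (Nat.sub_lt hr1 one_pos) hrn⟩
        ≠ b ⟨r - 1, lt_of_lt_of_le (Nat.sub_lt hr1 one_pos) hrn⟩) :
    (prefixPauli n c r * prefixPauli n b r).trace = 0 := by
  rw [trace_pp]
  refine Finset.prod_eq_zero
    (mem_univ (⟨r - 1, lt_of_lt_of_le (Nat.sub_lt hr1 one_pos) hrn⟩ : Fin n)) ?_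
  have hlt : r - 1 < r := Nat.sub_lt hr1 one_pos
  rw [if_pos hlt, if_pos hlt]
  exact pauli_mul_trace_ne hne

lemma prefixPauli_unitary (n : ℕ) (b : Fin n → Fin 3) (r : ℕ) :
    star (prefixPauli n b r) * prefixPauli n b r = 1 := by
  rw [prefixPauli_eq_kron, kron_star]
  have h1 : (fun i : Fin n => star (if (i : ℕ) < r then pauli (b i) else 1))
      = fun i : Fin n => if (i : ℕ) < r then pauli (b i) else 1 := by
    funext i
    by_cases h : (i : ℕ) < r
    · simp [h, pauli_star]
    · simp [h]
  rw [h1, kron_mul]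
  have h2 : (fun i : Fin n => (if (i : ℕ) < r then pauli (b i) else 1)
      * (if (i : ℕ) < r then pauli (b i) else 1)) = fun _ : Fin n => 1 := by
    funext i
    by_cases h : (i : ℕ) < r
    · rw [if_pos h, pauli_mul_self]
    · rw [if_neg h, one_mul]
  rw [h2, kron_one]

/-- Trace-distance lower bound: if the hidden strings of two prefix/tree states first disagree
at the (1-indexed) position `r`, and `c_r := β_r` for `1 ≤ r ≤ n-1` while `c_n := α`, then
`(1/2)‖ρ_b − ρ_{b̃}‖₁ ≥ |c_r|/2`. -/
theorem rhoState_traceDist_lower (n : ℕ) (hn : 1 ≤ n) (b btil : Fin n → Fin 3)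
    (α : ℝ) (β : ℕ → ℝ) (r : ℕ) (hr1 : 1 ≤ r) (hrn : r ≤ n)
    (hagree : ∀ i : Fin n, (i : ℕ) + 1 < r → b i = btil i)
    (hdiff : ∀ i : Fin n, (i : ℕ) + 1 = r → b i ≠ btil i)
    (hΔ : (rhoState n b α β - rhoState n btil α β).IsHermitian) :
    |if r ≤ n - 1 then β r else α| / 2 ≤ (1 / 2) * traceNorm hΔ := by
  set P := prefixPauli n b r with hPdef
  have hi0 : r - 1 < n := lt_of_lt_of_le (Nat.sub_lt hr1 one_pos) hrn
  have hne : btil ⟨r - 1, hi0⟩ ≠ b ⟨r - 1, hi0⟩ := by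
    have := hdiff ⟨r - 1, hi0⟩ (by simp [Nat.sub_add_cancel hr1])
    exact this.symm
  -- trace of each X_c * P
  have hXc : ∀ c : Fin n → Fin 3,
      ((1 + ∑ k ∈ Finset.Icc 1 (n - 1), (β k : ℂ) • prefixPauli n c k
        + (α : ℂ) • prefixPauli n c n) * P).trace
      = P.trace + ∑ k ∈ Finset.Icc 1 (n - 1), (β k : ℂ) * (prefixPauli n c k * P).trace
        + (α : ℂ) * (prefixPauli n c n * P).trace := by
    intro c
    rw [add_mul, add_mul, one_mul, Finset.sum_mul, trace_add, trace_add, trace_sum]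
    simp [smul_mul_assoc, trace_smul, smul_eq_mul]
  have htr : ((rhoState n b α β - rhoState n btil α β) * P).trace
      = (if r ≤ n - 1 then (β r : ℂ) else (α : ℂ)) := by
    rw [rhoState, rhoState, ← smul_sub, smul_mul_assoc, trace_smul, sub_mul, trace_sub,
      hXc b, hXc btil, smul_eq_mul]
    by_cases hc : r ≤ n - 1
    · have hrltn : r < n := lt_of_le_of_lt hc (Nat.sub_lt hn one_pos)
      have hsumb : ∑ k ∈ Finset.Icc 1 (n - 1), (β k : ℂ) * (prefixPauli n b k * P).trace
          = (β r : ℂ) * 2 ^ n := by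
        rw [Finset.sum_eq_single r]
        · rw [hPdef, trace_pp_same]
        · intro k hk hkr
          rcases lt_or_gt_of_ne hkr with h | h
          · rw [hPdef, trace_pp_lt n b b h hrn, mul_zero]
          · have hkn : k ≤ n := le_trans (Finset.mem_Icc.mp hk).2 (Nat.sub_le n 1)
            rw [hPdef, trace_pp_gt n b b h hkn, mul_zero]
        · intro h
          exact absurd (Finset.mem_Icc.mpr ⟨hr1, hc⟩) h
      have hsumbt : ∑ k ∈ Finset.Icc 1 (n - 1), (β k : ℂ) * (prefixPauli n btil k * P).trace
          = 0 := by
        refine Finset.sum_eq_zero fun k hk => ?_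
        rcases lt_trichotomy k r with h | h | h
        · rw [hPdef, trace_pp_lt n btil b h hrn, mul_zero]
        · subst h
          rw [hPdef, trace_pp_diff n btil b hr1 hrn hne, mul_zero]
        · have hkn : k ≤ n := le_trans (Finset.mem_Icc.mp hk).2 (Nat.sub_le n 1)
          rw [hPdef, trace_pp_gt n btil b h hkn, mul_zero]
      rw [hsumb, hsumbt, hPdef, trace_pp_gt n b b hrltn le_rfl,
        trace_pp_gt n btil b hrltn le_rfl, if_pos hc]
      field_simp
      ring
    · have hreq : r = n := by omega
      have hsum0 : ∀ c : Fin n → Fin 3,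
          ∑ k ∈ Finset.Icc 1 (n - 1), (β k : ℂ) * (prefixPauli n c k * P).trace = 0 := by
        intro c
        refine Finset.sum_eq_zero fun k hk => ?_
        have hklt : k < r := by
          have := (Finset.mem_Icc.mp hk).2; omega
        rw [hPdef, trace_pp_lt n c b hklt hrn, mul_zero]
      rw [hsum0 b, hsum0 btil, hPdef, hreq, trace_pp_same,
        trace_pp_diff n btil b (hreq ▸ hr1) (hreq ▸ le_rfl) (by simpa [hreq] using hne),
        if_neg (show ¬ n ≤ n - 1 by omega), mul_zero]
      field_simp
      ring
  have habs : ‖((rhoState n b α β - rhoState n btil α β) * P).trace‖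
      = |if r ≤ n - 1 then β r else α| := by
    rw [htr]
    split <;> rw [Complex.norm_real, Real.norm_eq_abs]
  have hineq := abs_trace_mul_le hΔ P (prefixPauli_unitary n b r)
  rw [habs] at hineq
  linarith

end
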